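/- arXiv:1501.02414 — 2 statements merged into one kernel-verified Lean document; each statement's English description precedes it below -/
import Mathlib

section
/- Let χ ∈ (0,1), θ ∈ (χ,1], η̄ > 0, {η_l} real numbers with 0 ≤ η_l ≤ η̄ l^{-θ}, and A a symmetric positive-definite real d×d matrix. Define F_{j,n} = j^{-χ} ∏_{l=j+1}^{n−1} (I − l^{-χ}A + η_l I) and F̄_{j,n} = η_j j^{χ} F_{j,n} for 1 ≤ j ≤ n−1 (products in decreasing order of index). Then for every fixed h ∈ ℝ^d, |Σ_{j=1}^{n−1} F̄_{j,n} h| → 0 as n → ∞. -/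
open Filter Finset
open scoped RealInnerProductSpace Topology

/-- `prodDesc B p q = B_q * B_{q-1} * ⋯ * B_p` (decreasing order of index);
an empty product (`p > q`) is the identity. -/
noncomputable def prodDesc {d : ℕ}
    (B : ℕ → EuclideanSpace ℝ (Fin d) →L[ℝ] EuclideanSpace ℝ (Fin d)) (p q : ℕ) :
    EuclideanSpace ℝ (Fin d) →L[ℝ] EuclideanSpace ℝ (Fin d) :=
  ((List.range (q + 1 - p)).map fun i => B (q - i)).prod

lemma prodDesc_empty {d : ℕ} (B : ℕ → EuclideanSpace ℝ (Fin d) →L[ℝ] EuclideanSpace ℝ (Fin d))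
    {p q : ℕ} (h : q < p) : prodDesc B p q = 1 := by
  unfold prodDesc
  have : q + 1 - p = 0 := by omega
  simp [this]

lemma prodDesc_self {d : ℕ} (B : ℕ → EuclideanSpace ℝ (Fin d) →L[ℝ] EuclideanSpace ℝ (Fin d))
    (p : ℕ) : prodDesc B p p = B p := by
  unfold prodDesc
  have : p + 1 - p = 1 := by omega
  rw [this, List.range_succ_eq_map, List.range_zero]
  simp

lemma prodDesc_succ_top {d : ℕ} (B : ℕ → EuclideanSpace ℝ (Fin d) →L[ℝ] EuclideanSpace ℝ (Fin d))
    {p q : ℕ} (h : p ≤ q + 1) : prodDesc B p (q + 1) = B (q + 1) * prodDesc B p q := by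
  unfold prodDesc
  have h1 : q + 1 + 1 - p = (q + 1 - p) + 1 := by omega
  rw [h1, List.range_succ_eq_map, List.map_cons, List.map_map, List.prod_cons]
  have h2 : List.map ((fun i => B (q + 1 - i)) ∘ Nat.succ) (List.range (q + 1 - p))
      = List.map (fun i => B (q - i)) (List.range (q + 1 - p)) :=
    List.map_congr_left (fun i _ => by show B (q + 1 - Nat.succ i) = B (q - i); congr 1; omega)
  rw [h2]
  norm_num

lemma prodDesc_norm_le {d : ℕ} (B : ℕ → EuclideanSpace ℝ (Fin d) →L[ℝ] EuclideanSpace ℝ (Fin d))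
    (c : ℕ → ℝ) (hbc : ∀ l, ‖B l‖ ≤ c l) (p q : ℕ) :
    ‖prodDesc B p q‖ ≤ ∏ l ∈ Icc p q, c l := by
  rcases le_or_gt p q with hpq | hpq
  · induction q, hpq using Nat.le_induction with
    | base => rw [prodDesc_self, Finset.Icc_self, Finset.prod_singleton]; exact hbc p
    | succ q hq ih =>
      rw [prodDesc_succ_top B (by omega), Finset.prod_Icc_succ_top (by omega)]
      calc ‖B (q+1) * prodDesc B p q‖ ≤ ‖B (q+1)‖ * ‖prodDesc B p q‖ := norm_mul_le _ _
        _ ≤ c (q+1) * ∏ l ∈ Icc p q, c l := by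
            apply mul_le_mul (hbc _) ih (norm_nonneg _) ((norm_nonneg _).trans (hbc _))
        _ = (∏ l ∈ Icc p q, c l) * c (q+1) := mul_comm _ _
  · rw [prodDesc_empty B hpq, Finset.Icc_eq_empty (by omega), Finset.prod_empty]
    exact ContinuousLinearMap.norm_id_le

lemma tele_aux (a : ℕ → ℝ) (M : ℕ) (ha : ∀ l, M ≤ l → 0 ≤ a l ∧ a l ≤ 1) (m : ℕ) :
    ∑ j ∈ Icc M m, a j * ∏ l ∈ Ioc j m, (1 - a l) ≤ 1 := by
  rcases le_or_gt M m with hMm | hMm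
  · induction m, hMm using Nat.le_induction with
    | base =>
      rw [Finset.Icc_self, Finset.sum_singleton, Finset.Ioc_self, Finset.prod_empty, mul_one]
      exact (ha M le_rfl).2
    | succ m hm ih =>
      rw [Finset.sum_Icc_succ_top (by omega)]
      have hsplit : ∀ j ∈ Icc M m, a j * ∏ l ∈ Ioc j (m+1), (1 - a l)
          = (1 - a (m+1)) * (a j * ∏ l ∈ Ioc j m, (1 - a l)) := by
        intro j hj
        rw [Finset.mem_Icc] at hj
        rw [Finset.prod_Ioc_succ_top hj.2]
        ring
      rw [Finset.sum_congr rfl hsplit, ← Finset.mul_sum, Finset.Ioc_self, Finset.prod_empty,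
        mul_one]
      have h1 := (ha (m+1) (by omega)).1
      have h2 := (ha (m+1) (by omega)).2
      have hnn : (0:ℝ) ≤ ∑ j ∈ Icc M m, a j * ∏ l ∈ Ioc j m, (1 - a l) := by
        apply Finset.sum_nonneg
        intro j hj
        rw [Finset.mem_Icc] at hj
        apply mul_nonneg (ha j hj.1).1
        apply Finset.prod_nonneg
        intro l hl
        rw [Finset.mem_Ioc] at hl
        have := (ha l (by omega)).2
        linarith
      nlinarith
  · rw [Finset.Icc_eq_empty (by omega), Finset.sum_empty]; norm_num

lemma prod_one_sub_tendsto_zero (a : ℕ → ℝ) (M : ℕ) (h0 : ∀ l, 0 ≤ a l)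
    (h1 : ∀ l, M ≤ l → a l ≤ 1) (hns : ¬ Summable a) :
    Tendsto (fun n : ℕ => ∏ l ∈ Icc M (n-1), (1 - a l)) atTop (𝓝 0) := by
  have hsum : Tendsto (fun n => ∑ i ∈ range n, a i) atTop atTop :=
    (not_summable_iff_tendsto_nat_atTop_of_nonneg h0).1 hns
  have hsum2 : Tendsto (fun n : ℕ => ∑ l ∈ Icc M (n-1), a l) atTop atTop := by
    apply Tendsto.congr' _ (tendsto_atTop_add_const_right atTop (-(∑ i ∈ range M, a i)) hsum)
    filter_upwards [eventually_ge_atTop (M+1)] with n hn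
    have h2 : Icc M (n-1) = Ico M n := by
      rw [← Finset.Ico_add_one_right_eq_Icc]
      congr 1
      omega
    rw [h2, Finset.sum_Ico_eq_sub _ (by omega)]
    ring
  have hexp : Tendsto (fun n : ℕ => Real.exp (-(∑ l ∈ Icc M (n-1), a l))) atTop (𝓝 0) :=
    Real.tendsto_exp_atBot.comp (tendsto_neg_atTop_atBot.comp hsum2)
  apply tendsto_of_tendsto_of_tendsto_of_le_of_le tendsto_const_nhds hexp
  · intro n
    apply Finset.prod_nonneg
    intro l hl
    rw [Finset.mem_Icc] at hl
    linarith [h1 l hl.1]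
  · intro n
    simp only
    rw [show -(∑ l ∈ Icc M (n-1), a l) = ∑ l ∈ Icc M (n-1), -(a l) by
      rw [Finset.sum_neg_distrib], Real.exp_sum]
    apply Finset.prod_le_prod
    · intro l hl
      rw [Finset.mem_Icc] at hl
      linarith [h1 l hl.1]
    · intro l hl
      linarith [Real.add_one_le_exp (-(a l))]

set_option maxHeartbeats 1000000 in
/-- Lemma 2 ii), second part: with `F_{j,n} = j^{-χ} ∏_{l=j+1}^{n−1}(I − l^{-χ}A + η_l I)`
and `F̄_{j,n} = η_j j^χ F_{j,n}`, for every fixed `h`, `|Σ_{j=1}^{n−1} F̄_{j,n} h| → 0`. -/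
theorem stmt_8 (d : ℕ) (hd : 0 < d) (χ θ η' : ℝ) (hχ : χ ∈ Set.Ioo (0 : ℝ) 1)
    (hθ : θ ∈ Set.Ioc χ 1) (hη' : 0 < η')
    (η : ℕ → ℝ) (hη : ∀ l : ℕ, 1 ≤ l → 0 ≤ η l ∧ η l ≤ η' * (l : ℝ) ^ (-θ))
    (A : EuclideanSpace ℝ (Fin d) →L[ℝ] EuclideanSpace ℝ (Fin d))
    (hAsym : ∀ x y : EuclideanSpace ℝ (Fin d), ⟪A x, y⟫ = ⟪x, A y⟫)
    (hApos : ∀ x : EuclideanSpace ℝ (Fin d), x ≠ 0 → 0 < ⟪A x, x⟫)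
    (h : EuclideanSpace ℝ (Fin d)) :
    Tendsto (fun n : ℕ =>
        ‖∑ j ∈ Icc 1 (n - 1), (η j * (j : ℝ) ^ χ) • ((j : ℝ) ^ (-χ) •
          (prodDesc (fun l => 1 - (l : ℝ) ^ (-χ) • A + η l • 1) (j + 1) (n - 1)) h)‖)
      atTop (𝓝 0) := by
  obtain ⟨hχ0, hχ1⟩ := hχ
  obtain ⟨hθχ, hθ1⟩ := hθ
  set B : ℕ → EuclideanSpace ℝ (Fin d) →L[ℝ] EuclideanSpace ℝ (Fin d) :=
    fun l => 1 - (l : ℝ) ^ (-χ) • A + η l • 1 with hBdef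
  -- smallest "eigenvalue"
  obtain ⟨lam, hlam, hlamA, hquad⟩ : ∃ lam : ℝ, 0 < lam ∧ lam ≤ ‖A‖ ∧
      ∀ x : EuclideanSpace ℝ (Fin d), lam * ‖x‖^2 ≤ ⟪A x, x⟫ := by
    have hsph : (Metric.sphere (0 : EuclideanSpace ℝ (Fin d)) 1).Nonempty :=
      ⟨EuclideanSpace.single ⟨0, hd⟩ 1, by
        rw [Metric.mem_sphere, dist_zero_right, EuclideanSpace.norm_single, norm_one]⟩
    have hcont : Continuous (fun x : EuclideanSpace ℝ (Fin d) => ⟪A x, x⟫) :=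
      Continuous.inner A.continuous continuous_id
    obtain ⟨x₀, hx₀mem, hx₀min⟩ :=
      (isCompact_sphere (0 : EuclideanSpace ℝ (Fin d)) 1).exists_isMinOn hsph hcont.continuousOn
    have hx₀ : ‖x₀‖ = 1 := by rwa [Metric.mem_sphere, dist_zero_right] at hx₀mem
    have hx₀ne : x₀ ≠ 0 := by intro h0; rw [h0, norm_zero] at hx₀; norm_num at hx₀
    refine ⟨⟪A x₀, x₀⟫, hApos x₀ hx₀ne, ?_, ?_⟩
    · calc ⟪A x₀, x₀⟫ ≤ ‖A x₀‖ * ‖x₀‖ := real_inner_le_norm _ _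
        _ ≤ (‖A‖ * ‖x₀‖) * ‖x₀‖ := by
            apply mul_le_mul_of_nonneg_right (A.le_opNorm x₀) (norm_nonneg _)
        _ = ‖A‖ := by rw [hx₀]; ring
    · intro x
      rcases eq_or_ne x 0 with rfl | hx
      · simp
      · have hxn : (0:ℝ) < ‖x‖ := norm_pos_iff.mpr hx
        have humem : ‖x‖⁻¹ • x ∈ Metric.sphere (0 : EuclideanSpace ℝ (Fin d)) 1 := by
          rw [Metric.mem_sphere, dist_zero_right, norm_smul, norm_inv, norm_norm,
            inv_mul_cancel₀ hxn.ne']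
        have hmin := isMinOn_iff.mp hx₀min _ humem
        have hcalc : ⟪A (‖x‖⁻¹ • x), ‖x‖⁻¹ • x⟫ = ‖x‖⁻¹ * (‖x‖⁻¹ * ⟪A x, x⟫) := by
          rw [map_smul, real_inner_smul_left, real_inner_smul_right]
        rw [hcalc] at hmin
        have h2 : ⟪A x₀, x₀⟫ * ‖x‖^2 ≤ ⟪A x, x⟫ := by
          rw [← sub_nonneg] at hmin ⊢
          have hx2 : (0:ℝ) < ‖x‖^2 := by positivity
          calc (0:ℝ) ≤ (‖x‖⁻¹ * (‖x‖⁻¹ * ⟪A x, x⟫) - ⟪A x₀, x₀⟫) * ‖x‖^2 := by positivity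
            _ = ⟪A x, x⟫ - ⟪A x₀, x₀⟫ * ‖x‖^2 := by field_simp
        linarith
  have hAA : lam^2 ≤ ‖A‖^2 := pow_le_pow_left₀ hlam.le hlamA 2
  -- operator norm bound
  have key : ∀ l : ℕ, (l:ℝ)^(-χ) * ‖A‖^2 ≤ lam → η l ≤ lam/4 * (l:ℝ)^(-χ) → 0 ≤ η l →
      ‖B l‖ ≤ 1 - lam/4 * (l:ℝ)^(-χ) := by
    intro l htA hηl hηl0
    set t : ℝ := (l:ℝ)^(-χ) with htdef
    have ht : 0 ≤ t := Real.rpow_nonneg (Nat.cast_nonneg l) _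
    have h6 : t * lam^2 ≤ lam := le_trans (mul_le_mul_of_nonneg_left hAA ht) htA
    have htlam : t * lam ≤ 1 := by nlinarith
    apply ContinuousLinearMap.opNorm_le_bound _ (by nlinarith)
    intro x
    have hkey : ‖x - t • A x‖ ≤ (1 - t*lam/2) * ‖x‖ := by
      have hb : (0:ℝ) ≤ 1 - t*lam/2 := by nlinarith
      have h1 : ‖x - t • A x‖^2 ≤ ((1 - t*lam/2) * ‖x‖)^2 := by
        rw [norm_sub_sq_real]
        have e1 : ⟪x, t • A x⟫ = t * ⟪A x, x⟫ := by
          rw [real_inner_smul_right, real_inner_comm]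
        have e2 : ‖t • A x‖^2 = t^2 * ‖A x‖^2 := by
          rw [norm_smul, mul_pow, Real.norm_eq_abs, sq_abs]
        have e3 : ‖A x‖ ≤ ‖A‖ * ‖x‖ := A.le_opNorm x
        have e4 := hquad x
        have e5 : ‖A x‖^2 ≤ (‖A‖ * ‖x‖)^2 := pow_le_pow_left₀ (norm_nonneg _) e3 2
        rw [e1, e2]
        have e6 : t^2 * ‖A x‖^2 ≤ t^2 * (‖A‖ * ‖x‖)^2 := mul_le_mul_of_nonneg_left e5 (sq_nonneg t)
        have e7 : t^2 * (‖A‖ * ‖x‖)^2 = (t * ‖A‖^2) * (t * ‖x‖^2) := by ring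
        have e8 : (t * ‖A‖^2) * (t * ‖x‖^2) ≤ lam * (t * ‖x‖^2) :=
          mul_le_mul_of_nonneg_right htA (by positivity)
        have e9 : t * (lam * ‖x‖^2) ≤ t * ⟪A x, x⟫ := mul_le_mul_of_nonneg_left e4 ht
        nlinarith [sq_nonneg (t * lam * ‖x‖)]
      have := Real.sqrt_le_sqrt h1
      rwa [Real.sqrt_sq (norm_nonneg _), Real.sqrt_sq (by positivity)] at this
    have happ : (B l) x = (x - t • A x) + η l • x := by
      simp [hBdef, ContinuousLinearMap.add_apply, ContinuousLinearMap.sub_apply,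
        ContinuousLinearMap.smul_apply, ContinuousLinearMap.one_apply]
      rfl
    rw [happ]
    calc ‖(x - t • A x) + η l • x‖ ≤ ‖x - t • A x‖ + ‖η l • x‖ := norm_add_le _ _
      _ ≤ (1 - t*lam/2) * ‖x‖ + η l * ‖x‖ := by
          rw [norm_smul, Real.norm_eq_abs, abs_of_nonneg hηl0]
          exact add_le_add hkey le_rfl
      _ ≤ (1 - lam/4*t) * ‖x‖ := by nlinarith [norm_nonneg x]
  -- decay of rpow sequences
  have ht0 : Tendsto (fun l : ℕ => (l:ℝ)^(-χ)) atTop (𝓝 0) :=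
    (tendsto_rpow_neg_atTop hχ0).comp tendsto_natCast_atTop_atTop
  have hs0 : Tendsto (fun l : ℕ => η' * (l:ℝ)^(χ - θ)) atTop (𝓝 0) := by
    have : Tendsto (fun l : ℕ => (l:ℝ)^(-(θ - χ))) atTop (𝓝 0) :=
      (tendsto_rpow_neg_atTop (by linarith)).comp tendsto_natCast_atTop_atTop
    have h2 := this.const_mul η'
    rw [mul_zero] at h2
    convert h2 using 3 with l
    ring_nf
  have hsplitrpow : ∀ j : ℕ, 1 ≤ j → (j:ℝ)^(-θ) = (j:ℝ)^(χ - θ) * (j:ℝ)^(-χ) := by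
    intro j hj
    have : (0:ℝ) < (j:ℝ) := by exact_mod_cast hj
    rw [← Real.rpow_add this]
    congr 1
    ring
  -- choice of L₀
  have hev : ∀ᶠ l : ℕ in atTop, ((l:ℝ)^(-χ) * ‖A‖^2 ≤ lam ∧ η' * (l:ℝ)^(χ - θ) ≤ lam/4 ∧ 1 ≤ l) := by
    have e1 : ∀ᶠ l : ℕ in atTop, (l:ℝ)^(-χ) * ‖A‖^2 ≤ lam := by
      have hmc := ht0.mul_const (‖A‖^2)
      rw [zero_mul] at hmc
      filter_upwards [hmc.eventually_lt_const hlam] with l hl using hl.le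
    have e2 : ∀ᶠ l : ℕ in atTop, η' * (l:ℝ)^(χ - θ) ≤ lam/4 := by
      have := hs0.eventually_lt_const (by positivity : (0:ℝ) < lam/4)
      filter_upwards [this] with l hl using hl.le
    filter_upwards [e1, e2, eventually_ge_atTop 1] with l h1 h2 h3 using ⟨h1, h2, h3⟩
  obtain ⟨L₀, hL₀⟩ := eventually_atTop.mp hev
  set a : ℕ → ℝ := fun l => lam/4 * (l:ℝ)^(-χ) with hadef
  have ha0 : ∀ l, 0 ≤ a l := fun l => by
    have := Real.rpow_nonneg (Nat.cast_nonneg l) (-χ); positivity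
  have haL : ∀ l, L₀ ≤ l → a l ≤ 1 := by
    intro l hl
    have h1 := (hL₀ l hl).1
    have ht : 0 ≤ (l:ℝ)^(-χ) := Real.rpow_nonneg (Nat.cast_nonneg l) _
    have h6 : (l:ℝ)^(-χ) * lam^2 ≤ lam := le_trans (mul_le_mul_of_nonneg_left hAA ht) h1
    have : (l:ℝ)^(-χ) * lam ≤ 1 := by nlinarith
    simp only [hadef]
    nlinarith
  have hBle : ∀ l, L₀ ≤ l → ‖B l‖ ≤ 1 - a l := by
    intro l hl
    obtain ⟨h1, h2, h3⟩ := hL₀ l hl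
    have ht : 0 ≤ (l:ℝ)^(-χ) := Real.rpow_nonneg (Nat.cast_nonneg l) _
    refine key l h1 ?_ (hη l h3).1
    calc η l ≤ η' * (l:ℝ)^(-θ) := (hη l h3).2
      _ = (η' * (l:ℝ)^(χ - θ)) * (l:ℝ)^(-χ) := by rw [hsplitrpow l h3]; ring
      _ ≤ lam/4 * (l:ℝ)^(-χ) := mul_le_mul_of_nonneg_right h2 ht
  have hns : ¬ Summable a := by
    intro hs
    have h2 := hs.mul_left (4/lam)
    have h3 : Summable (fun l : ℕ => (l:ℝ)^(-χ)) := by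
      refine h2.congr fun l => ?_
      simp only [hadef]
      field_simp
    rw [Real.summable_nat_rpow] at h3
    linarith
  -- main ε-argument
  rw [Metric.tendsto_atTop]
  intro ε hε
  have hh1 : (0:ℝ) < ‖h‖ + 1 := by positivity
  set δ : ℝ := ε / (2 * (‖h‖ + 1)) with hδdef
  have hδ : 0 < δ := by positivity
  -- choice of M
  have hev2 : ∀ᶠ j : ℕ in atTop, η' * (j:ℝ)^(χ - θ) ≤ lam/4 * δ := by
    have := hs0.eventually_lt_const (by positivity : (0:ℝ) < lam/4 * δ)
    filter_upwards [this] with j hj using hj.le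
  obtain ⟨M, hMall⟩ := eventually_atTop.mp
    (hev2.and ((eventually_ge_atTop L₀).and (eventually_ge_atTop 1)))
  have hML : L₀ ≤ M := (hMall M le_rfl).2.1
  have hM1 : 1 ≤ M := (hMall M le_rfl).2.2
  have hMδ : ∀ j, M ≤ j → η' * (j:ℝ)^(χ - θ) ≤ lam/4 * δ := fun j hj => (hMall j hj).1
  have hηδ : ∀ j, M ≤ j → η j ≤ δ * a j := by
    intro j hj
    have hj1 : 1 ≤ j := le_trans hM1 hj
    have ht : 0 ≤ (j:ℝ)^(-χ) := Real.rpow_nonneg (Nat.cast_nonneg j) _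
    calc η j ≤ η' * (j:ℝ)^(-θ) := (hη j hj1).2
      _ = (η' * (j:ℝ)^(χ - θ)) * (j:ℝ)^(-χ) := by rw [hsplitrpow j hj1]; ring
      _ ≤ (lam/4 * δ) * (j:ℝ)^(-χ) := mul_le_mul_of_nonneg_right (hMδ j hj) ht
      _ = δ * a j := by simp only [hadef]; ring
  -- the dominating sequence c
  set c : ℕ → ℝ := fun l => if l < M then ‖B l‖ else 1 - a l with hcdef
  have hc : ∀ l, ‖B l‖ ≤ c l := by
    intro l
    simp only [hcdef]
    split
    · exact le_rfl
    · exact hBle l (le_trans hML (by omega))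
  have hc0 : ∀ l, 0 ≤ c l := by
    intro l
    simp only [hcdef]
    split
    · exact norm_nonneg _
    · have := haL l (le_trans hML (by omega)); linarith
  have hcM : ∀ l, M ≤ l → c l = 1 - a l := by
    intro l hl
    simp only [hcdef, if_neg (by omega : ¬ l < M)]
  -- constant K and Q
  set K : ℝ := ∑ j ∈ Ioc 0 (M-1), η j * ((∏ l ∈ Ioc j (M-1), c l) * ‖h‖) with hKdef
  set Q : ℕ → ℝ := fun n => ∏ l ∈ Icc M (n-1), (1 - a l) with hQdef
  have hQ : Tendsto Q atTop (𝓝 0) :=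
    prod_one_sub_tendsto_zero a M ha0 (fun l hl => haL l (le_trans hML hl)) hns
  have hKQ : Tendsto (fun n => K * Q n) atTop (𝓝 0) := by
    have := hQ.const_mul K
    rwa [mul_zero] at this
  obtain ⟨N₁, hN₁⟩ := eventually_atTop.mp (hKQ.eventually_lt_const (half_pos hε))
  refine ⟨max N₁ (M+1), fun n hn => ?_⟩
  have hnN₁ : N₁ ≤ n := le_trans (le_max_left _ _) hn
  have hnM : M + 1 ≤ n := le_trans (le_max_right _ _) hn
  rw [Real.dist_0_eq_abs, abs_of_nonneg (norm_nonneg _)]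
  have hIoc : Ioc (M-1) (n-1) = Icc M (n-1) := by
    rw [← Finset.Icc_add_one_left_eq_Ioc]
    congr 1
    omega
  have hQc : ∏ l ∈ Ioc (M-1) (n-1), c l = Q n := by
    rw [hIoc]
    exact Finset.prod_congr rfl fun l hl => hcM l (Finset.mem_Icc.mp hl).1
  -- termwise bound
  have hterm : ∀ j ∈ Icc 1 (n-1),
      ‖(η j * (j:ℝ)^χ) • ((j:ℝ)^(-χ) • (prodDesc B (j+1) (n-1)) h)‖
        ≤ η j * ((∏ l ∈ Ioc j (n-1), c l) * ‖h‖) := by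
    intro j hj
    rw [Finset.mem_Icc] at hj
    have hjpos : (0:ℝ) < (j:ℝ) := by exact_mod_cast hj.1
    have hsm : (η j * (j:ℝ)^χ) • ((j:ℝ)^(-χ) • (prodDesc B (j+1) (n-1)) h)
        = η j • (prodDesc B (j+1) (n-1)) h := by
      rw [smul_smul, mul_assoc, ← Real.rpow_add hjpos]
      norm_num
    rw [hsm, norm_smul, Real.norm_eq_abs, abs_of_nonneg (hη j hj.1).1]
    apply mul_le_mul_of_nonneg_left _ (hη j hj.1).1
    calc ‖(prodDesc B (j+1) (n-1)) h‖ ≤ ‖prodDesc B (j+1) (n-1)‖ * ‖h‖ :=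
          (prodDesc B (j+1) (n-1)).le_opNorm h
      _ ≤ (∏ l ∈ Ioc j (n-1), c l) * ‖h‖ := by
          apply mul_le_mul_of_nonneg_right _ (norm_nonneg h)
          rw [← Finset.Icc_add_one_left_eq_Ioc]
          exact prodDesc_norm_le B c hc (j+1) (n-1)
  have h1 : ‖∑ j ∈ Icc 1 (n-1), (η j * (j:ℝ)^χ) • ((j:ℝ)^(-χ) • (prodDesc B (j+1) (n-1)) h)‖
      ≤ ∑ j ∈ Icc 1 (n-1), η j * ((∏ l ∈ Ioc j (n-1), c l) * ‖h‖) :=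
    norm_sum_le_of_le _ hterm
  -- split the sum
  have hsplit : ∑ j ∈ Icc 1 (n-1), η j * ((∏ l ∈ Ioc j (n-1), c l) * ‖h‖)
      = (∑ j ∈ Ioc 0 (M-1), η j * ((∏ l ∈ Ioc j (n-1), c l) * ‖h‖))
        + ∑ j ∈ Ioc (M-1) (n-1), η j * ((∏ l ∈ Ioc j (n-1), c l) * ‖h‖) := by
    rw [show Icc 1 (n-1) = Ioc 0 (n-1) from Finset.Icc_add_one_left_eq_Ioc 0 (n-1)]
    exact (Finset.sum_Ioc_consecutive _ (by omega) (by omega)).symm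
  have hhead : ∑ j ∈ Ioc 0 (M-1), η j * ((∏ l ∈ Ioc j (n-1), c l) * ‖h‖) = K * Q n := by
    rw [hKdef, Finset.sum_mul]
    apply Finset.sum_congr rfl
    intro j hj
    rw [Finset.mem_Ioc] at hj
    rw [← Finset.prod_Ioc_consecutive c hj.2 (by omega), hQc]
    ring
  have htail : ∑ j ∈ Ioc (M-1) (n-1), η j * ((∏ l ∈ Ioc j (n-1), c l) * ‖h‖) ≤ δ * ‖h‖ := by
    rw [hIoc]
    have hstep : ∀ j ∈ Icc M (n-1), η j * ((∏ l ∈ Ioc j (n-1), c l) * ‖h‖)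
        ≤ (δ * ‖h‖) * (a j * ∏ l ∈ Ioc j (n-1), (1 - a l)) := by
      intro j hj
      rw [Finset.mem_Icc] at hj
      have hjM := hj.1
      have hprodc : ∏ l ∈ Ioc j (n-1), c l = ∏ l ∈ Ioc j (n-1), (1 - a l) :=
        Finset.prod_congr rfl fun l hl => hcM l (by have := Finset.mem_Ioc.mp hl; omega)
      have hpnn : 0 ≤ ∏ l ∈ Ioc j (n-1), (1 - a l) := by
        apply Finset.prod_nonneg
        intro l hl
        rw [Finset.mem_Ioc] at hl
        have := haL l (le_trans hML (by omega))
        linarith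
      rw [hprodc]
      calc η j * ((∏ l ∈ Ioc j (n-1), (1 - a l)) * ‖h‖)
          ≤ (δ * a j) * ((∏ l ∈ Ioc j (n-1), (1 - a l)) * ‖h‖) := by
            apply mul_le_mul_of_nonneg_right (hηδ j hjM) (by positivity)
        _ = (δ * ‖h‖) * (a j * ∏ l ∈ Ioc j (n-1), (1 - a l)) := by ring
    calc ∑ j ∈ Icc M (n-1), η j * ((∏ l ∈ Ioc j (n-1), c l) * ‖h‖)
        ≤ ∑ j ∈ Icc M (n-1), (δ * ‖h‖) * (a j * ∏ l ∈ Ioc j (n-1), (1 - a l)) :=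
          Finset.sum_le_sum hstep
      _ = (δ * ‖h‖) * ∑ j ∈ Icc M (n-1), a j * ∏ l ∈ Ioc j (n-1), (1 - a l) := by
          rw [Finset.mul_sum]
      _ ≤ (δ * ‖h‖) * 1 := by
          apply mul_le_mul_of_nonneg_left _ (by positivity)
          exact tele_aux a M (fun l hl => ⟨ha0 l, haL l (le_trans hML hl)⟩) (n-1)
      _ = δ * ‖h‖ := mul_one _
  have hδh : δ * ‖h‖ < ε / 2 := by
    rw [hδdef]
    rw [div_mul_eq_mul_div, div_lt_iff₀ (by positivity)]
    nlinarith [norm_nonneg h]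
  calc ‖∑ j ∈ Icc 1 (n-1), (η j * (j:ℝ)^χ) • ((j:ℝ)^(-χ) • (prodDesc B (j+1) (n-1)) h)‖
      ≤ ∑ j ∈ Icc 1 (n-1), η j * ((∏ l ∈ Ioc j (n-1), c l) * ‖h‖) := h1
    _ = K * Q n + ∑ j ∈ Ioc (M-1) (n-1), η j * ((∏ l ∈ Ioc j (n-1), c l) * ‖h‖) := by
        rw [hsplit, hhead]
    _ ≤ K * Q n + δ * ‖h‖ := by linarith [htail]
    _ < ε/2 + ε/2 := add_lt_add (hN₁ n hnN₁) hδh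
    _ = ε := by ring
end

section
/- Let χ ∈ (0,1), θ ∈ (χ,1], η̄ > 0, a > 0, and define n_k = ⌊(ak)^{1/(1−χ)}⌋ and I_k = {n_k, …, n_{k+1}−1}. Let A be a symmetric positive-definite real d×d matrix, {Â_l} symmetric positive-semidefinite d×d matrices with ‖n^{-χ} Σ_{l=1}^n (Â_l − A)‖ → 0 as n → ∞, and {η_l} real numbers with 0 ≤ η_l ≤ η̄ l^{-θ}. Then the sequence ∏_{l∈I_k} (1 + l^{-χ}‖Â_l‖ + η_l), k = 0,1,2,…, is bounded. -/
open Filter Finset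
open scoped RealInnerProductSpace Topology

noncomputable def trE (d : ℕ) (T : EuclideanSpace ℝ (Fin d) →L[ℝ] EuclideanSpace ℝ (Fin d)) : ℝ :=
  ∑ i, ⟪T (EuclideanSpace.basisFun (Fin d) ℝ i), EuclideanSpace.basisFun (Fin d) ℝ i⟫

lemma trE_add (d : ℕ) (S T : EuclideanSpace ℝ (Fin d) →L[ℝ] EuclideanSpace ℝ (Fin d)) :
    trE d (S + T) = trE d S + trE d T := by
  simp [trE, inner_add_left, Finset.sum_add_distrib]

lemma trE_sum (d : ℕ) {ι : Type*} (s : Finset ι)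
    (g : ι → EuclideanSpace ℝ (Fin d) →L[ℝ] EuclideanSpace ℝ (Fin d)) :
    trE d (∑ l ∈ s, g l) = ∑ l ∈ s, trE d (g l) := by
  simp only [trE, ContinuousLinearMap.coe_sum', Finset.sum_apply, sum_inner]
  exact Finset.sum_comm

lemma trE_le (d : ℕ) (T : EuclideanSpace ℝ (Fin d) →L[ℝ] EuclideanSpace ℝ (Fin d)) :
    trE d T ≤ d * ‖T‖ := by
  have h : ∀ i : Fin d, ⟪T (EuclideanSpace.basisFun (Fin d) ℝ i),
      EuclideanSpace.basisFun (Fin d) ℝ i⟫ ≤ ‖T‖ := by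
    intro i
    have h1 : ‖EuclideanSpace.basisFun (Fin d) ℝ i‖ = 1 :=
      (EuclideanSpace.basisFun (Fin d) ℝ).orthonormal.1 i
    calc ⟪T (EuclideanSpace.basisFun (Fin d) ℝ i), EuclideanSpace.basisFun (Fin d) ℝ i⟫
        ≤ ‖T (EuclideanSpace.basisFun (Fin d) ℝ i)‖ * ‖EuclideanSpace.basisFun (Fin d) ℝ i‖ :=
          real_inner_le_norm _ _
      _ ≤ (‖T‖ * ‖EuclideanSpace.basisFun (Fin d) ℝ i‖) * ‖EuclideanSpace.basisFun (Fin d) ℝ i‖ := by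
          exact mul_le_mul_of_nonneg_right (T.le_opNorm _) (norm_nonneg _)
      _ = ‖T‖ := by rw [h1]; ring
  calc trE d T ≤ ∑ _i : Fin d, ‖T‖ := Finset.sum_le_sum (fun i _ => h i)
    _ = d * ‖T‖ := by rw [Finset.sum_const, Finset.card_univ, Fintype.card_fin, nsmul_eq_mul]

lemma cs_psd {d : ℕ} (T : EuclideanSpace ℝ (Fin d) →L[ℝ] EuclideanSpace ℝ (Fin d))
    (hs : ∀ x y, ⟪T x, y⟫ = ⟪x, T y⟫) (hp : ∀ x, 0 ≤ ⟪T x, x⟫) (x y : EuclideanSpace ℝ (Fin d)) :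
    ⟪T x, y⟫ ^ 2 ≤ ⟪T x, x⟫ * ⟪T y, y⟫ := by
  have key : ∀ t : ℝ, 0 ≤ ⟪T y, y⟫ * (t * t) + (2 * ⟪T x, y⟫) * t + ⟪T x, x⟫ := by
    intro t
    have h0 := hp (x + t • y)
    have hyx : ⟪T y, x⟫ = ⟪T x, y⟫ := by rw [hs y x, real_inner_comm]
    simp only [map_add, map_smul, inner_add_left, inner_add_right, real_inner_smul_left,
      real_inner_smul_right] at h0
    rw [hyx] at h0
    ring_nf at h0 ⊢
    linarith [h0]
  have hd := discrim_le_zero key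
  rw [discrim] at hd
  nlinarith [hd]

lemma norm_le_d_mul_trE {d : ℕ} (T : EuclideanSpace ℝ (Fin d) →L[ℝ] EuclideanSpace ℝ (Fin d))
    (hs : ∀ x y, ⟪T x, y⟫ = ⟪x, T y⟫) (hp : ∀ x, 0 ≤ ⟪T x, x⟫) :
    ‖T‖ ≤ d * trE d T := by
  set b := EuclideanSpace.basisFun (Fin d) ℝ with hb
  have hbnorm : ∀ i, ‖b i‖ = 1 := fun i => b.orthonormal.1 i
  have htr0 : 0 ≤ trE d T := Finset.sum_nonneg fun i _ => hp _
  have h1 : ‖T‖ ≤ ∑ i, ‖T (b i)‖ := by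
    refine T.opNorm_le_bound (Finset.sum_nonneg fun i _ => norm_nonneg _) (fun x => ?_)
    conv_lhs => rw [← b.sum_repr' x]
    rw [map_sum]
    calc ‖∑ i, T (⟪b i, x⟫ • b i)‖ ≤ ∑ i, ‖T (⟪b i, x⟫ • b i)‖ := norm_sum_le _ _
      _ = ∑ i, |⟪b i, x⟫| * ‖T (b i)‖ := by
          refine Finset.sum_congr rfl (fun i _ => ?_)
          rw [map_smul, norm_smul, Real.norm_eq_abs]
      _ ≤ ∑ i, ‖x‖ * ‖T (b i)‖ := by
          refine Finset.sum_le_sum (fun i _ => mul_le_mul_of_nonneg_right ?_ (norm_nonneg _))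
          calc |⟪b i, x⟫| ≤ ‖b i‖ * ‖x‖ := abs_real_inner_le_norm _ _
            _ = ‖x‖ := by rw [hbnorm i, one_mul]
      _ = (∑ i, ‖T (b i)‖) * ‖x‖ := by rw [← Finset.mul_sum, mul_comm]
  have h2 : ∀ i, ‖T (b i)‖ ^ 2 ≤ ⟪T (b i), b i⟫ * ‖T‖ := by
    intro i
    have hcs := cs_psd T hs hp (b i) (T (b i))
    have e1 : ⟪T (b i), T (b i)⟫ = ‖T (b i)‖ ^ 2 := real_inner_self_eq_norm_sq _
    have e2 : ⟪T (T (b i)), T (b i)⟫ ≤ ‖T‖ * ‖T (b i)‖ ^ 2 := by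
      calc ⟪T (T (b i)), T (b i)⟫ ≤ ‖T (T (b i))‖ * ‖T (b i)‖ := real_inner_le_norm _ _
        _ ≤ (‖T‖ * ‖T (b i)‖) * ‖T (b i)‖ :=
            mul_le_mul_of_nonneg_right (T.le_opNorm _) (norm_nonneg _)
        _ = ‖T‖ * ‖T (b i)‖ ^ 2 := by ring
    have hTii : 0 ≤ ⟪T (b i), b i⟫ := hp _
    have e4 : (‖T (b i)‖ ^ 2) ^ 2 ≤ ⟪T (b i), b i⟫ * (‖T‖ * ‖T (b i)‖ ^ 2) := by
      calc (‖T (b i)‖ ^ 2) ^ 2 = ⟪T (b i), T (b i)⟫ ^ 2 := by rw [e1]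
        _ ≤ ⟪T (b i), b i⟫ * ⟪T (T (b i)), T (b i)⟫ := hcs
        _ ≤ ⟪T (b i), b i⟫ * (‖T‖ * ‖T (b i)‖ ^ 2) := mul_le_mul_of_nonneg_left e2 hTii
    rcases eq_or_lt_of_le (norm_nonneg (T (b i))) with h0 | h0
    · rw [← h0]
      nlinarith [mul_nonneg hTii (norm_nonneg T)]
    · nlinarith [e4, pow_pos h0 2]
  have h3 : (∑ i, ‖T (b i)‖) ^ 2 ≤ (d : ℝ) * ∑ i, ‖T (b i)‖ ^ 2 := by
    have := sq_sum_le_card_mul_sum_sq (s := (Finset.univ : Finset (Fin d)))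
      (f := fun i => ‖T (b i)‖)
    simpa using this
  have h4 : ∑ i, ‖T (b i)‖ ^ 2 ≤ trE d T * ‖T‖ := by
    calc ∑ i, ‖T (b i)‖ ^ 2 ≤ ∑ i, ⟪T (b i), b i⟫ * ‖T‖ := Finset.sum_le_sum (fun i _ => h2 i)
      _ = trE d T * ‖T‖ := by rw [← Finset.sum_mul]; rfl
  rcases eq_or_lt_of_le (norm_nonneg T) with h0 | h0
  · rw [← h0]
    positivity
  · nlinarith [h1, h3, h4, htr0,
      Finset.sum_nonneg (fun i (_ : i ∈ Finset.univ) => norm_nonneg (T (b i)))]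

lemma sum_Ico_shift {G : Type*} [AddCommGroup G] (g : ℕ → G) {m m' : ℕ}
    (h1 : 1 ≤ m) (h2 : m ≤ m') :
    ∑ l ∈ Finset.Ico m m', g l =
      (∑ l ∈ Finset.Icc 1 (m' - 1), g l) - ∑ l ∈ Finset.Icc 1 (m - 1), g l := by
  have hIcc : ∀ t : ℕ, Finset.Icc 1 t = Finset.Ioc 0 t := by
    intro t; ext x; simp only [Finset.mem_Icc, Finset.mem_Ioc]; omega
  have hIco : Finset.Ico m m' = Finset.Ioc (m - 1) (m' - 1) := by
    ext x; simp only [Finset.mem_Ico, Finset.mem_Ioc]; omega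
  rw [hIco, hIcc, hIcc]
  exact eq_sub_of_add_eq' (Finset.sum_Ioc_consecutive g (Nat.zero_le _) (by omega))

lemma rpow_neg_anti {c u v : ℝ} (hc : 0 ≤ c) (hu : 0 < u) (huv : u ≤ v) :
    v ^ (-c) ≤ u ^ (-c) := by
  rw [Real.rpow_neg hu.le, Real.rpow_neg (hu.trans_le huv).le]
  exact inv_anti₀ (Real.rpow_pos_of_pos hu c) (Real.rpow_le_rpow hu.le huv hc)

set_option maxHeartbeats 1000000 in
/-- Lemma 2 v): with blocks `I_k = {n_k, …, n_{k+1}−1}`, `n_k = ⌊(ak)^{1/(1−χ)}⌋`,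
the sequence `∏_{l∈I_k} (1 + l^{-χ}‖Â_l‖ + η_l)` is bounded. -/
theorem stmt_11 (d : ℕ) (hd : 0 < d) (χ θ η' a : ℝ) (hχ : χ ∈ Set.Ioo (0 : ℝ) 1)
    (hθ : θ ∈ Set.Ioc χ 1) (hη' : 0 < η') (ha : 0 < a)
    (A : EuclideanSpace ℝ (Fin d) →L[ℝ] EuclideanSpace ℝ (Fin d))
    (hAsym : ∀ x y : EuclideanSpace ℝ (Fin d), ⟪A x, y⟫ = ⟪x, A y⟫)
    (hApos : ∀ x : EuclideanSpace ℝ (Fin d), x ≠ 0 → 0 < ⟪A x, x⟫)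
    (Ah : ℕ → EuclideanSpace ℝ (Fin d) →L[ℝ] EuclideanSpace ℝ (Fin d))
    (hAhsym : ∀ (l : ℕ) (x y : EuclideanSpace ℝ (Fin d)), ⟪Ah l x, y⟫ = ⟪x, Ah l y⟫)
    (hAhpsd : ∀ (l : ℕ) (x : EuclideanSpace ℝ (Fin d)), 0 ≤ ⟪Ah l x, x⟫)
    (hcoefA : Tendsto (fun n : ℕ => ‖(n : ℝ) ^ (-χ) • ∑ l ∈ Icc 1 n, (Ah l - A)‖)
      atTop (𝓝 0))
    (η : ℕ → ℝ) (hη : ∀ l : ℕ, 1 ≤ l → 0 ≤ η l ∧ η l ≤ η' * (l : ℝ) ^ (-θ)) :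
    ∃ K : ℝ, ∀ k : ℕ,
      ∏ l ∈ Ico (⌊(a * k) ^ (1 / (1 - χ))⌋₊) (⌊(a * (k + 1)) ^ (1 / (1 - χ))⌋₊),
        (1 + (l : ℝ) ^ (-χ) * ‖Ah l‖ + η l) ≤ K := by
  obtain ⟨hχ0, hχ1⟩ := hχ
  obtain ⟨hθχ, hθ1⟩ := hθ
  have h1χ : (0:ℝ) < 1 - χ := by linarith
  suffices h : ∃ (K0 : ℕ) (C : ℝ), ∀ k : ℕ, K0 ≤ k →
      (∏ l ∈ Ico (⌊(a * k) ^ (1 / (1 - χ))⌋₊) (⌊(a * (k + 1)) ^ (1 / (1 - χ))⌋₊),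
        (1 + (l : ℝ) ^ (-χ) * ‖Ah l‖ + η l)) ≤ C by
    obtain ⟨K0, C, hC⟩ := h
    refine ⟨C + (∑ j ∈ Finset.range K0,
      |∏ l ∈ Ico (⌊(a * j) ^ (1 / (1 - χ))⌋₊) (⌊(a * (j + 1)) ^ (1 / (1 - χ))⌋₊),
        (1 + (l : ℝ) ^ (-χ) * ‖Ah l‖ + η l)|) + |C|, fun k => ?_⟩
    have hsum0 : 0 ≤ ∑ j ∈ Finset.range K0,
        |∏ l ∈ Ico (⌊(a * j) ^ (1 / (1 - χ))⌋₊) (⌊(a * (j + 1)) ^ (1 / (1 - χ))⌋₊),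
          (1 + (l : ℝ) ^ (-χ) * ‖Ah l‖ + η l)| :=
      Finset.sum_nonneg fun j _ => abs_nonneg _
    rcases le_or_gt K0 k with hk | hk
    · have h1 := hC k hk
      linarith [abs_nonneg C]
    · have h1 := le_abs_self (∏ l ∈ Ico (⌊(a * k) ^ (1 / (1 - χ))⌋₊)
        (⌊(a * (k + 1)) ^ (1 / (1 - χ))⌋₊), (1 + (l : ℝ) ^ (-χ) * ‖Ah l‖ + η l))
      have h2 : |∏ l ∈ Ico (⌊(a * k) ^ (1 / (1 - χ))⌋₊) (⌊(a * (k + 1)) ^ (1 / (1 - χ))⌋₊),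
          (1 + (l : ℝ) ^ (-χ) * ‖Ah l‖ + η l)|
          ≤ ∑ j ∈ Finset.range K0,
            |∏ l ∈ Ico (⌊(a * j) ^ (1 / (1 - χ))⌋₊) (⌊(a * (j + 1)) ^ (1 / (1 - χ))⌋₊),
              (1 + (l : ℝ) ^ (-χ) * ‖Ah l‖ + η l)| :=
        Finset.single_le_sum (f := fun j : ℕ =>
          |∏ l ∈ Ico (⌊(a * j) ^ (1 / (1 - χ))⌋₊) (⌊(a * (j + 1)) ^ (1 / (1 - χ))⌋₊),
            (1 + (l : ℝ) ^ (-χ) * ‖Ah l‖ + η l)|)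
          (fun j _ => abs_nonneg _) (Finset.mem_range.mpr hk)
      linarith [neg_abs_le C]
  set p : ℝ := 1 / (1 - χ) with hp
  have hp1 : 1 ≤ p := by
    rw [hp, le_div_iff₀ h1χ]; linarith
  have hppos : 0 < p := lt_of_lt_of_le one_pos hp1
  have hpχ : p * (1 - χ) = 1 := by rw [hp]; field_simp
  have hpm1 : p - 1 = p * χ := by
    have hexp : p * 1 - p * χ = 1 := by rw [← mul_sub]; exact hpχ
    linarith
  have h2p1ge : (1:ℝ) ≤ (2:ℝ) ^ p := by
    rw [show (1:ℝ) = (2:ℝ) ^ (0:ℝ) from (Real.rpow_zero 2).symm]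
    exact Real.rpow_le_rpow_of_exponent_le one_le_two hppos.le
  obtain ⟨N₁, hN₁⟩ := (Metric.tendsto_atTop.mp hcoefA) 1 one_pos
  have hS1 : ∀ m : ℕ, N₁ ≤ m → 1 ≤ m → ‖∑ l ∈ Icc 1 m, (Ah l - A)‖ ≤ (m:ℝ) ^ χ := by
    intro m hm hm1
    have h := hN₁ m hm
    have hns : ‖(m:ℝ) ^ (-χ) • ∑ l ∈ Icc 1 m, (Ah l - A)‖
        = (m:ℝ) ^ (-χ) * ‖∑ l ∈ Icc 1 m, (Ah l - A)‖ := by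
      have hh := norm_smul ((m:ℝ) ^ (-χ)) (∑ l ∈ Icc 1 m, (Ah l - A))
      rwa [Real.norm_eq_abs, abs_of_nonneg (Real.rpow_nonneg (Nat.cast_nonneg m) _)] at hh
    rw [Real.dist_eq, sub_zero, abs_norm, hns] at h
    have hmpos : (0:ℝ) < m := by exact_mod_cast hm1
    have hid : (m:ℝ) ^ χ * ((m:ℝ) ^ (-χ) * ‖∑ l ∈ Icc 1 m, (Ah l - A)‖)
        = ‖∑ l ∈ Icc 1 m, (Ah l - A)‖ := by
      rw [← mul_assoc, ← Real.rpow_add hmpos, add_neg_cancel, Real.rpow_zero, one_mul]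
    calc ‖∑ l ∈ Icc 1 m, (Ah l - A)‖
        = (m:ℝ) ^ χ * ((m:ℝ) ^ (-χ) * ‖∑ l ∈ Icc 1 m, (Ah l - A)‖) := hid.symm
      _ ≤ (m:ℝ) ^ χ * 1 := mul_le_mul_of_nonneg_left h.le (Real.rpow_nonneg hmpos.le _)
      _ = (m:ℝ) ^ χ := mul_one _
  set B : ℝ := 2 * ((N₁:ℝ) + 2) with hB
  obtain ⟨K1, hK1⟩ := exists_nat_ge (max 1 B / a)
  refine ⟨max K1 1, Real.exp (2 * (a ^ p * ((2:ℝ) ^ p - 1) + 1) * a ^ (-(p - 1))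
    * ((d:ℝ) * trE d A + η') + 2 * (d:ℝ) ^ 2 * ((2:ℝ) ^ p + 1)), ?_⟩
  intro k hk
  have hk1 : 1 ≤ k := le_trans (le_max_right K1 1) hk
  have hkR : (1:ℝ) ≤ (k:ℝ) := by exact_mod_cast hk1
  have hkpos : (0:ℝ) < (k:ℝ) := by linarith
  have hK1k : (K1:ℝ) ≤ (k:ℝ) := by exact_mod_cast le_trans (le_max_left K1 1) hk
  have hak : max 1 B ≤ a * k := by
    rw [div_le_iff₀ ha] at hK1
    calc max 1 B ≤ (K1:ℝ) * a := hK1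
      _ ≤ (k:ℝ) * a := mul_le_mul_of_nonneg_right hK1k ha.le
      _ = a * k := mul_comm _ _
  have hak1 : (1:ℝ) ≤ a * k := le_trans (le_max_left _ _) hak
  have hakB : B ≤ a * k := le_trans (le_max_right _ _) hak
  set x := (a * (k:ℝ)) ^ p with hxdef
  set y := (a * ((k:ℝ) + 1)) ^ p with hydef
  set m := ⌊x⌋₊ with hm
  set m' := ⌊y⌋₊ with hm'
  have hxax : a * k ≤ x := by
    calc a * (k:ℝ) = (a * (k:ℝ)) ^ (1:ℝ) := (Real.rpow_one _).symm
      _ ≤ x := Real.rpow_le_rpow_of_exponent_le hak1 hp1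
  have hxB : B ≤ x := le_trans hakB hxax
  have hB2 : (2:ℝ) ≤ B := by
    rw [hB]
    have h0 : (0:ℝ) ≤ (N₁:ℝ) := Nat.cast_nonneg N₁
    linarith
  have hx2 : (2:ℝ) ≤ x := le_trans hB2 hxB
  have hxpos : (0:ℝ) < x := by linarith
  have hypos : (0:ℝ) < y := Real.rpow_pos_of_pos (mul_pos ha (by linarith)) p
  have hxy : x ≤ y := Real.rpow_le_rpow (mul_pos ha hkpos).le
    (mul_le_mul_of_nonneg_left (by linarith) ha.le) hppos.le
  have hmx : (m:ℝ) ≤ x := Nat.floor_le hxpos.le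
  have hm'y : (m':ℝ) ≤ y := Nat.floor_le hypos.le
  have hmlb : x - 1 ≤ (m:ℝ) := (Nat.sub_one_lt_floor x).le
  have hmm' : m ≤ m' := Nat.floor_mono hxy
  have hhalf : x / 2 ≤ (m:ℝ) := by linarith
  have hmN : N₁ + 2 ≤ m := by
    have h1 : ((N₁ + 2 : ℕ):ℝ) ≤ (m:ℝ) := by push_cast; rw [hB] at hxB; linarith
    exact_mod_cast h1
  have hm1 : 1 ≤ m := by omega
  have hmcast : (1:ℝ) ≤ (m:ℝ) := by exact_mod_cast hm1
  have hmposR : (0:ℝ) < (m:ℝ) := by linarith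
  -- bounds on the partial sums
  have hSx : ‖∑ l ∈ Icc 1 (m - 1), (Ah l - A)‖ ≤ x ^ χ := by
    refine (hS1 (m - 1) (by omega) (by omega)).trans ?_
    refine Real.rpow_le_rpow (Nat.cast_nonneg _) ?_ hχ0.le
    calc ((m - 1 : ℕ) : ℝ) ≤ (m : ℝ) := by exact_mod_cast Nat.sub_le m 1
      _ ≤ x := hmx
  have hSy : ‖∑ l ∈ Icc 1 (m' - 1), (Ah l - A)‖ ≤ y ^ χ := by
    refine (hS1 (m' - 1) (by omega) (by omega)).trans ?_
    refine Real.rpow_le_rpow (Nat.cast_nonneg _) ?_ hχ0.le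
    calc ((m' - 1 : ℕ) : ℝ) ≤ (m' : ℝ) := by exact_mod_cast Nat.sub_le m' 1
      _ ≤ y := hm'y
  have hsplit : ∑ l ∈ Ico m m', (Ah l - A)
      = (∑ l ∈ Icc 1 (m' - 1), (Ah l - A)) - ∑ l ∈ Icc 1 (m - 1), (Ah l - A) :=
    sum_Ico_shift _ hm1 hmm'
  have hbne : ∀ i : Fin d, (EuclideanSpace.basisFun (Fin d) ℝ) i ≠ 0 := by
    intro i hcon
    have h1 : ‖EuclideanSpace.basisFun (Fin d) ℝ i‖ = 1 :=
      (EuclideanSpace.basisFun (Fin d) ℝ).orthonormal.1 i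
    rw [hcon, norm_zero] at h1
    norm_num at h1
  have htrA0 : 0 ≤ trE d A := Finset.sum_nonneg fun i _ => (hApos _ (hbne i)).le
  have htr : ∑ l ∈ Ico m m', trE d (Ah l)
      = ((m' - m : ℕ) : ℝ) * trE d A + trE d ((∑ l ∈ Icc 1 (m' - 1), (Ah l - A))
          - ∑ l ∈ Icc 1 (m - 1), (Ah l - A)) := by
    have hpt : ∀ l, trE d (Ah l) = trE d (Ah l - A) + trE d A := by
      intro l
      rw [← trE_add]
      congr 1
      abel
    calc ∑ l ∈ Ico m m', trE d (Ah l) = ∑ l ∈ Ico m m', (trE d (Ah l - A) + trE d A) :=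
        Finset.sum_congr rfl fun l _ => hpt l
      _ = (∑ l ∈ Ico m m', trE d (Ah l - A)) + (Ico m m').card * trE d A := by
          rw [Finset.sum_add_distrib, Finset.sum_const, nsmul_eq_mul]
      _ = _ := by
          rw [← trE_sum, hsplit, Nat.card_Ico, add_comm]
  have hsum_norm : ∑ l ∈ Ico m m', ‖Ah l‖
      ≤ (d:ℝ) * (((m' - m : ℕ):ℝ) * trE d A + (d:ℝ) * (y ^ χ + x ^ χ)) := by
    have hΔ : trE d ((∑ l ∈ Icc 1 (m' - 1), (Ah l - A)) - ∑ l ∈ Icc 1 (m - 1), (Ah l - A))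
        ≤ (d:ℝ) * (y ^ χ + x ^ χ) := by
      refine le_trans (trE_le d _) ?_
      refine mul_le_mul_of_nonneg_left ?_ (Nat.cast_nonneg d)
      exact le_trans (norm_sub_le _ _) (add_le_add hSy hSx)
    calc ∑ l ∈ Ico m m', ‖Ah l‖ ≤ ∑ l ∈ Ico m m', (d:ℝ) * trE d (Ah l) :=
        Finset.sum_le_sum fun l _ => norm_le_d_mul_trE _ (hAhsym l) (hAhpsd l)
      _ = (d:ℝ) * ∑ l ∈ Ico m m', trE d (Ah l) := by rw [Finset.mul_sum]
      _ = (d:ℝ) * (((m' - m : ℕ):ℝ) * trE d A + trE d _) := by rw [htr]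
      _ ≤ _ := mul_le_mul_of_nonneg_left (add_le_add_right hΔ _) (Nat.cast_nonneg d)
  clear hsplit htr hSx hSy hS1 hN₁
  -- numeric estimates
  have hnpk_nonneg : (0:ℝ) ≤ (m:ℝ) ^ (-χ) := Real.rpow_nonneg (Nat.cast_nonneg m) _
  have hxhalfpos : (0:ℝ) < x / 2 := by linarith
  have h2χ : (2:ℝ) ^ χ ≤ 2 := by
    calc (2:ℝ) ^ χ ≤ (2:ℝ) ^ (1:ℝ) := Real.rpow_le_rpow_of_exponent_le one_le_two hχ1.le
      _ = 2 := Real.rpow_one 2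
  have hnpk2 : (m:ℝ) ^ (-χ) ≤ 2 * x ^ (-χ) := by
    have h1 : (m:ℝ) ^ (-χ) ≤ (x / 2) ^ (-χ) := rpow_neg_anti hχ0.le hxhalfpos hhalf
    have h2 : (x / 2) ^ (-χ) = x ^ (-χ) * 2 ^ χ := by
      rw [div_eq_mul_inv, Real.mul_rpow hxpos.le (by norm_num),
        Real.inv_rpow (by norm_num : (0:ℝ) ≤ 2), Real.rpow_neg (by norm_num : (0:ℝ) ≤ 2), inv_inv]
    calc (m:ℝ) ^ (-χ) ≤ x ^ (-χ) * 2 ^ χ := h2 ▸ h1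
      _ ≤ x ^ (-χ) * 2 := mul_le_mul_of_nonneg_left h2χ (Real.rpow_nonneg hxpos.le _)
      _ = 2 * x ^ (-χ) := mul_comm _ _
  have hyx_div : y / x ≤ (2:ℝ) ^ p := by
    have hk10 : (0:ℝ) < (k:ℝ) + 1 := by linarith
    have hak0 : (0:ℝ) < a * (k:ℝ) := mul_pos ha hkpos
    have hak10 : (0:ℝ) < a * ((k:ℝ) + 1) := mul_pos ha hk10
    have h2p2 : (2:ℝ) ≤ (2:ℝ) ^ p := by
      calc (2:ℝ) = (2:ℝ) ^ (1:ℝ) := (Real.rpow_one 2).symm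
        _ ≤ (2:ℝ) ^ p := Real.rpow_le_rpow_of_exponent_le one_le_two hp1
    have h1 : y / x = ((a * ((k:ℝ) + 1)) / (a * (k:ℝ))) ^ p := by
      rw [hxdef, hydef, ← Real.div_rpow hak10.le hak0.le]
    rw [h1]
    refine Real.rpow_le_rpow (div_nonneg hak10.le hak0.le) ?_ hppos.le
    rw [div_le_iff₀ hak0]
    have t1 : a * ((k:ℝ) + 1) ≤ a * (2 * (k:ℝ)) :=
      mul_le_mul_of_nonneg_left (by linarith) ha.le
    have t2 : 2 * (a * (k:ℝ)) ≤ (2:ℝ) ^ p * (a * (k:ℝ)) :=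
      mul_le_mul_of_nonneg_right h2p2 hak0.le
    linarith
  have hxinv_yχ : x ^ (-χ) * y ^ χ ≤ (2:ℝ) ^ p := by
    have h1 : x ^ (-χ) * y ^ χ = (y / x) ^ χ := by
      rw [Real.div_rpow hypos.le hxpos.le, Real.rpow_neg hxpos.le]
      ring
    rw [h1]
    calc (y / x) ^ χ ≤ ((2:ℝ) ^ p) ^ χ :=
        Real.rpow_le_rpow (div_nonneg hypos.le hxpos.le) hyx_div hχ0.le
      _ ≤ ((2:ℝ) ^ p) ^ (1:ℝ) := Real.rpow_le_rpow_of_exponent_le h2p1ge hχ1.le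
      _ = (2:ℝ) ^ p := Real.rpow_one _
  have hxinv_xχ : x ^ (-χ) * x ^ χ = 1 := by
    rw [← Real.rpow_add hxpos]
    simp
  have key2 : (m:ℝ) ^ (-χ) * (y ^ χ + x ^ χ) ≤ 2 * ((2:ℝ) ^ p + 1) := by
    have hyxχ0 : 0 ≤ y ^ χ + x ^ χ := by positivity
    calc (m:ℝ) ^ (-χ) * (y ^ χ + x ^ χ) ≤ (2 * x ^ (-χ)) * (y ^ χ + x ^ χ) :=
        mul_le_mul_of_nonneg_right hnpk2 hyxχ0
      _ = 2 * (x ^ (-χ) * y ^ χ + x ^ (-χ) * x ^ χ) := by ring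
      _ ≤ 2 * ((2:ℝ) ^ p + 1) := by linarith [hxinv_yχ, hxinv_xχ]
  have hcard : ((m' - m : ℕ):ℝ) ≤ y - x + 1 := by
    rw [Nat.cast_sub hmm']
    linarith
  have hconv : ((k:ℝ) + 1) ^ p ≤ (k:ℝ) ^ p + ((2:ℝ) ^ p - 1) * (k:ℝ) ^ (p - 1) := by
    set u : ℝ := 1 / (k:ℝ) with hu
    have hu0 : 0 < u := by positivity
    have hu1 : u ≤ 1 := by rw [hu, div_le_one hkpos]; exact hkR
    have hcv := (convexOn_rpow hp1).2
      (Set.mem_Ici.mpr zero_le_one) (Set.mem_Ici.mpr (by norm_num : (0:ℝ) ≤ 2))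
      (by linarith : (0:ℝ) ≤ 1 - u) hu0.le (by ring)
    simp only [smul_eq_mul, mul_one, Real.one_rpow] at hcv
    have harg : (1 - u) + u * 2 = 1 + u := by ring
    rw [harg] at hcv
    have hk1u : (k:ℝ) * (1 + u) = (k:ℝ) + 1 := by
      rw [hu, mul_add, mul_one, mul_one_div_cancel hkpos.ne']
    have hkp : ((k:ℝ) + 1) ^ p = (k:ℝ) ^ p * (1 + u) ^ p := by
      rw [← hk1u, Real.mul_rpow hkpos.le (by linarith)]
    have hkpu : (k:ℝ) ^ p * u = (k:ℝ) ^ (p - 1) := by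
      rw [Real.rpow_sub hkpos, Real.rpow_one, hu]
      ring
    calc ((k:ℝ) + 1) ^ p = (k:ℝ) ^ p * (1 + u) ^ p := hkp
      _ ≤ (k:ℝ) ^ p * ((1 - u) + u * 2 ^ p) :=
          mul_le_mul_of_nonneg_left hcv (Real.rpow_nonneg hkpos.le _)
      _ = (k:ℝ) ^ p + ((2:ℝ) ^ p - 1) * ((k:ℝ) ^ p * u) := by ring
      _ = (k:ℝ) ^ p + ((2:ℝ) ^ p - 1) * (k:ℝ) ^ (p - 1) := by rw [hkpu]
  have hxap : x = a ^ p * (k:ℝ) ^ p := Real.mul_rpow ha.le hkpos.le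
  have hyap : y = a ^ p * ((k:ℝ) + 1) ^ p := Real.mul_rpow ha.le (by linarith)
  have hap0 : (0:ℝ) ≤ a ^ p := Real.rpow_nonneg ha.le p
  have hyxdiff : y - x ≤ a ^ p * ((2:ℝ) ^ p - 1) * (k:ℝ) ^ (p - 1) := by
    rw [hxap, hyap]
    have t := mul_le_mul_of_nonneg_left hconv hap0
    have texp : a ^ p * ((k:ℝ) ^ p + ((2:ℝ) ^ p - 1) * (k:ℝ) ^ (p - 1))
        = a ^ p * (k:ℝ) ^ p + a ^ p * ((2:ℝ) ^ p - 1) * (k:ℝ) ^ (p - 1) := by ring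
    rw [texp] at t
    linarith
  have hxnegχ : x ^ (-χ) = a ^ (-(p - 1)) * (k:ℝ) ^ (-(p - 1)) := by
    have e1 : x ^ (-χ) = a ^ (p * -χ) * (k:ℝ) ^ (p * -χ) := by
      rw [hxap, Real.mul_rpow (Real.rpow_nonneg ha.le p) (Real.rpow_nonneg hkpos.le p),
        ← Real.rpow_mul ha.le, ← Real.rpow_mul hkpos.le]
    rw [e1, show p * -χ = -(p - 1) from by rw [hpm1]; ring]
  have hkinv : (k:ℝ) ^ (-(p - 1)) ≤ 1 := by
    have h1 : (k:ℝ) ^ (-(p - 1)) ≤ (k:ℝ) ^ (0:ℝ) :=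
      Real.rpow_le_rpow_of_exponent_le hkR (by linarith)
    simpa using h1
  have hkid : (k:ℝ) ^ (-(p - 1)) * (k:ℝ) ^ (p - 1) = 1 := by
    rw [← Real.rpow_add hkpos]
    simp
  have hanegp0 : (0:ℝ) ≤ a ^ (-(p - 1)) := Real.rpow_nonneg ha.le _
  have hkpm10 : (0:ℝ) ≤ (k:ℝ) ^ (p - 1) := Real.rpow_nonneg hkpos.le _
  have hkpm1inv0 : (0:ℝ) ≤ (k:ℝ) ^ (-(p - 1)) := Real.rpow_nonneg hkpos.le _
  have key1 : (m:ℝ) ^ (-χ) * ((m' - m : ℕ):ℝ)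
      ≤ 2 * (a ^ p * ((2:ℝ) ^ p - 1) + 1) * a ^ (-(p - 1)) := by
    have hc0 : (0:ℝ) ≤ ((m' - m : ℕ):ℝ) := Nat.cast_nonneg _
    have hQ0 : (0:ℝ) ≤ a ^ p * ((2:ℝ) ^ p - 1) := mul_nonneg hap0 (by linarith)
    have h1 : (m:ℝ) ^ (-χ) * ((m' - m : ℕ):ℝ)
        ≤ (2 * x ^ (-χ)) * (a ^ p * ((2:ℝ) ^ p - 1) * (k:ℝ) ^ (p - 1) + 1) := by
      refine mul_le_mul hnpk2 ?_ hc0 (by positivity)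
      have := mul_nonneg hQ0 hkpm10
      linarith [hcard, hyxdiff]
    rw [hxnegχ] at h1
    calc (m:ℝ) ^ (-χ) * ((m' - m : ℕ):ℝ)
        ≤ 2 * (a ^ (-(p - 1)) * (k:ℝ) ^ (-(p - 1)))
          * (a ^ p * ((2:ℝ) ^ p - 1) * (k:ℝ) ^ (p - 1) + 1) := h1
      _ = 2 * a ^ (-(p - 1)) * (a ^ p * ((2:ℝ) ^ p - 1)
            * ((k:ℝ) ^ (-(p - 1)) * (k:ℝ) ^ (p - 1)) + (k:ℝ) ^ (-(p - 1))) := by ring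
      _ = 2 * a ^ (-(p - 1)) * (a ^ p * ((2:ℝ) ^ p - 1) + (k:ℝ) ^ (-(p - 1))) := by
          rw [hkid, mul_one]
      _ ≤ 2 * a ^ (-(p - 1)) * (a ^ p * ((2:ℝ) ^ p - 1) + 1) := by
          refine mul_le_mul_of_nonneg_left (add_le_add_right hkinv _)
            (mul_nonneg (by norm_num) hanegp0)
      _ = 2 * (a ^ p * ((2:ℝ) ^ p - 1) + 1) * a ^ (-(p - 1)) := by ring
  -- combine
  have hterm : ∀ l ∈ Ico m m', (l:ℝ) ^ (-χ) * ‖Ah l‖ + η l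
      ≤ (m:ℝ) ^ (-χ) * ‖Ah l‖ + η' * (m:ℝ) ^ (-χ) := by
    intro l hl
    obtain ⟨hl1, _⟩ := Finset.mem_Ico.mp hl
    have hlm : (m:ℝ) ≤ (l:ℝ) := by exact_mod_cast hl1
    have hl1' : (1:ℝ) ≤ (l:ℝ) := le_trans hmcast hlm
    have e1 : (l:ℝ) ^ (-χ) ≤ (m:ℝ) ^ (-χ) := rpow_neg_anti hχ0.le hmposR hlm
    have e2 : η l ≤ η' * (m:ℝ) ^ (-χ) := by
      obtain ⟨_, hηl⟩ := hη l (le_trans hm1 hl1)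
      calc η l ≤ η' * (l:ℝ) ^ (-θ) := hηl
        _ ≤ η' * (l:ℝ) ^ (-χ) := mul_le_mul_of_nonneg_left
            (Real.rpow_le_rpow_of_exponent_le hl1' (by linarith)) hη'.le
        _ ≤ η' * (m:ℝ) ^ (-χ) := mul_le_mul_of_nonneg_left e1 hη'.le
    exact add_le_add (mul_le_mul_of_nonneg_right e1 (norm_nonneg _)) e2
  have hsum : ∑ l ∈ Ico m m', ((l:ℝ) ^ (-χ) * ‖Ah l‖ + η l)
      ≤ 2 * (a ^ p * ((2:ℝ) ^ p - 1) + 1) * a ^ (-(p - 1)) * ((d:ℝ) * trE d A + η')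
        + 2 * (d:ℝ) ^ 2 * ((2:ℝ) ^ p + 1) := by
    calc ∑ l ∈ Ico m m', ((l:ℝ) ^ (-χ) * ‖Ah l‖ + η l)
        ≤ ∑ l ∈ Ico m m', ((m:ℝ) ^ (-χ) * ‖Ah l‖ + η' * (m:ℝ) ^ (-χ)) :=
          Finset.sum_le_sum hterm
      _ = (m:ℝ) ^ (-χ) * (∑ l ∈ Ico m m', ‖Ah l‖)
            + ((m' - m : ℕ):ℝ) * (η' * (m:ℝ) ^ (-χ)) := by
          rw [Finset.sum_add_distrib, ← Finset.mul_sum, Finset.sum_const, Nat.card_Ico,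
            nsmul_eq_mul]
      _ ≤ (m:ℝ) ^ (-χ) * ((d:ℝ) * (((m' - m : ℕ):ℝ) * trE d A + (d:ℝ) * (y ^ χ + x ^ χ)))
            + ((m' - m : ℕ):ℝ) * (η' * (m:ℝ) ^ (-χ)) :=
          add_le_add_left (mul_le_mul_of_nonneg_left hsum_norm hnpk_nonneg) _
      _ = ((m:ℝ) ^ (-χ) * ((m' - m : ℕ):ℝ)) * ((d:ℝ) * trE d A + η')
            + (d:ℝ) ^ 2 * ((m:ℝ) ^ (-χ) * (y ^ χ + x ^ χ)) := by ring
      _ ≤ 2 * (a ^ p * ((2:ℝ) ^ p - 1) + 1) * a ^ (-(p - 1)) * ((d:ℝ) * trE d A + η')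
            + (d:ℝ) ^ 2 * (2 * ((2:ℝ) ^ p + 1)) := by
          refine add_le_add (mul_le_mul_of_nonneg_right key1 ?_)
            (mul_le_mul_of_nonneg_left key2 (by positivity))
          have := mul_nonneg (Nat.cast_nonneg d) htrA0
          linarith
      _ = _ := by ring
  refine le_trans ?_ (Real.exp_le_exp.mpr hsum)
  rw [Real.exp_sum]
  refine Finset.prod_le_prod (fun l hl => ?_) (fun l hl => ?_)
  · obtain ⟨hl1, _⟩ := Finset.mem_Ico.mp hl
    have h1 : 0 ≤ (l:ℝ) ^ (-χ) * ‖Ah l‖ :=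
      mul_nonneg (Real.rpow_nonneg (Nat.cast_nonneg l) _) (norm_nonneg _)
    have h2 : 0 ≤ η l := (hη l (le_trans hm1 hl1)).1
    linarith
  · have h := Real.add_one_le_exp ((l:ℝ) ^ (-χ) * ‖Ah l‖ + η l)
    linarith
end
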